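/- (Simultaneous decycling bound) Let G be a Garside group and a ∈ G with left normal form a = Δ^p s₁ ⋯ s_l, where l ≥ 1, and set q := p + l = sup a. Let X ∈ G⁺. If sup(X a X⁻¹) ≤ q − 1, then X ≽ s_l. -/

import Mathlib

/-- A Garside structure on a group `G`: a submonoid `G⁺` of positive elements
together with a Garside element `Δ`, satisfying the Garside axioms. -/
structure GarsideStructure (G : Type*) [Group G] where
  /-- the monoid `G⁺` of positive elements -/
  pos : Submonoid G
  /-- the Garside element `Δ` -/
  Δ : G
  delta_mem : Δ ∈ pos
  /-- `G⁺` is Noetherian -/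
  noetherian : ∀ a ∈ pos, ∃ n : ℕ, ∀ l : List G,
    (∀ x ∈ l, x ∈ pos ∧ x ≠ 1) → l.prod = a → l.length ≤ n
  /-- any two elements of `G⁺` admit a least common right multiple (w.r.t. `≼`) -/
  lcm_right : ∀ a ∈ pos, ∀ b ∈ pos, ∃ m ∈ pos,
    a⁻¹ * m ∈ pos ∧ b⁻¹ * m ∈ pos ∧
      ∀ c ∈ pos, a⁻¹ * c ∈ pos → b⁻¹ * c ∈ pos → m⁻¹ * c ∈ pos
  /-- any two elements of `G⁺` admit a least common left multiple (w.r.t. `≽`) -/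
  lcm_left : ∀ a ∈ pos, ∀ b ∈ pos, ∃ m ∈ pos,
    m * a⁻¹ ∈ pos ∧ m * b⁻¹ ∈ pos ∧
      ∀ c ∈ pos, c * a⁻¹ ∈ pos → c * b⁻¹ ∈ pos → c * m⁻¹ ∈ pos
  /-- `G` is the group of fractions of `G⁺` -/
  fractions : ∀ g : G, ∃ a ∈ pos, ∃ b ∈ pos, g = a⁻¹ * b
  /-- `Δ` is balanced: its left divisors in `G⁺` coincide with its right divisors -/
  balanced : ∀ s ∈ pos, (s⁻¹ * Δ ∈ pos ↔ Δ * s⁻¹ ∈ pos)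
  /-- the set of simple elements (divisors of `Δ`) is finite -/
  simples_finite : {s : G | s ∈ pos ∧ s⁻¹ * Δ ∈ pos}.Finite
  /-- the simple elements generate `G⁺` -/
  simples_generate : Submonoid.closure {s : G | s ∈ pos ∧ s⁻¹ * Δ ∈ pos} = pos

namespace GarsideStructure

variable {G : Type*} [Group G]

/-- `a ≼ b` : left divisibility. -/
def LeftDvd (Γ : GarsideStructure G) (a b : G) : Prop := a⁻¹ * b ∈ Γ.pos

/-- `b ≽ a` : right divisibility. -/
def RightDvd (Γ : GarsideStructure G) (b a : G) : Prop := b * a⁻¹ ∈ Γ.pos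

/-- a simple element: a divisor of `Δ`. -/
def Simple (Γ : GarsideStructure G) (s : G) : Prop := s ∈ Γ.pos ∧ Γ.LeftDvd s Γ.Δ

/-- an atom of `G⁺`. -/
def Atom (Γ : GarsideStructure G) (a : G) : Prop :=
  a ∈ Γ.pos ∧ a ≠ 1 ∧ ∀ b ∈ Γ.pos, ∀ c ∈ Γ.pos, a = b * c → b = 1 ∨ c = 1

/-- the iterated automorphism `τ^k`, where `τ(x) = Δ⁻¹xΔ`; so `τ^k(x) = Δ^(-k) x Δ^k`. -/
def tau (Γ : GarsideStructure G) (k : ℤ) (x : G) : G := Γ.Δ ^ (-k) * x * Γ.Δ ^ k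

/-- `d` is the greatest common left divisor (`∧`) of `a` and `b`. -/
def IsLeftGcd (Γ : GarsideStructure G) (d a b : G) : Prop :=
  d ∈ Γ.pos ∧ Γ.LeftDvd d a ∧ Γ.LeftDvd d b ∧
    ∀ c ∈ Γ.pos, Γ.LeftDvd c a → Γ.LeftDvd c b → Γ.LeftDvd c d

/-- `d` is the greatest common right divisor (`⋀̃`) of `a` and `b`. -/
def IsRightGcd (Γ : GarsideStructure G) (d a b : G) : Prop :=
  d ∈ Γ.pos ∧ Γ.RightDvd a d ∧ Γ.RightDvd b d ∧
    ∀ c ∈ Γ.pos, Γ.RightDvd a c → Γ.RightDvd b c → Γ.RightDvd d c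

/-- membership of a tuple `a ∈ Gʳ` in the interval `[p,q]`:
`pᵢ ≤ inf aᵢ` (i.e. `Δ^pᵢ ≼ aᵢ`) and `sup aᵢ ≤ qᵢ` (i.e. `aᵢ ≼ Δ^qᵢ`) for all `i`. -/
def InInterval (Γ : GarsideStructure G) {r : ℕ} (p q : Fin r → ℤ) (a : Fin r → G) : Prop :=
  ∀ i, Γ.LeftDvd (Γ.Δ ^ (p i)) (a i) ∧ Γ.LeftDvd (a i) (Γ.Δ ^ (q i))

/-- `‖a‖`: the maximal number of atoms in an expression of `a` as a product of atoms. -/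
noncomputable def anorm (Γ : GarsideStructure G) (a : G) : ℕ :=
  sSup {n | ∃ l : List G, (∀ x ∈ l, Γ.Atom x) ∧ l.prod = a ∧ l.length = n}

variable (Γ : GarsideStructure G)

lemma tau_one_mem {x : G} (hx : x ∈ Γ.pos) : Γ.Δ⁻¹ * x * Γ.Δ ∈ Γ.pos := by
  rw [← Γ.simples_generate] at hx
  induction hx using Submonoid.closure_induction with
  | mem t ht =>
      obtain ⟨ht1, ht2⟩ := ht
      have hb := (Γ.balanced _ ht2).2 (by
        have h : Γ.Δ * (t⁻¹ * Γ.Δ)⁻¹ = t := by group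
        rw [h]; exact ht1)
      have h : Γ.Δ⁻¹ * t * Γ.Δ = (t⁻¹ * Γ.Δ)⁻¹ * Γ.Δ := by group
      rw [h]; exact hb
  | one => simpa using Γ.pos.one_mem
  | mul a b _ _ ha hb =>
      have h : Γ.Δ⁻¹ * (a * b) * Γ.Δ = (Γ.Δ⁻¹ * a * Γ.Δ) * (Γ.Δ⁻¹ * b * Γ.Δ) := by group
      rw [h]; exact Γ.pos.mul_mem ha hb

lemma tau_inv_mem {x : G} (hx : x ∈ Γ.pos) : Γ.Δ * x * Γ.Δ⁻¹ ∈ Γ.pos := by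
  rw [← Γ.simples_generate] at hx
  induction hx using Submonoid.closure_induction with
  | mem t ht =>
      obtain ⟨ht1, ht2⟩ := ht
      have hw : Γ.Δ * t⁻¹ ∈ Γ.pos := (Γ.balanced t ht1).1 ht2
      have hb := (Γ.balanced _ hw).1 (by
        have h : (Γ.Δ * t⁻¹)⁻¹ * Γ.Δ = t := by group
        rw [h]; exact ht1)
      have h : Γ.Δ * t * Γ.Δ⁻¹ = Γ.Δ * (Γ.Δ * t⁻¹)⁻¹ := by group
      rw [h]; exact hb
  | one => simpa using Γ.pos.one_mem
  | mul a b _ _ ha hb =>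
      have h : Γ.Δ * (a * b) * Γ.Δ⁻¹ = (Γ.Δ * a * Γ.Δ⁻¹) * (Γ.Δ * b * Γ.Δ⁻¹) := by group
      rw [h]; exact Γ.pos.mul_mem ha hb

lemma tau_zpow_mem (k : ℤ) : ∀ x ∈ Γ.pos, Γ.Δ ^ (-k) * x * Γ.Δ ^ k ∈ Γ.pos := by
  induction k using Int.induction_on with
  | zero => intro x hx; simpa using hx
  | succ k ih =>
      intro x hx
      have h1 := Γ.tau_one_mem (ih x hx)
      have h : Γ.Δ ^ (-((k : ℤ) + 1)) * x * Γ.Δ ^ ((k : ℤ) + 1)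
          = Γ.Δ⁻¹ * (Γ.Δ ^ (-(k : ℤ)) * x * Γ.Δ ^ (k : ℤ)) * Γ.Δ := by group
      rw [h]; exact h1
  | pred k ih =>
      intro x hx
      have h1 := Γ.tau_inv_mem (ih x hx)
      have h : Γ.Δ ^ (-(-(k : ℤ) - 1)) * x * Γ.Δ ^ (-(k : ℤ) - 1)
          = Γ.Δ * (Γ.Δ ^ (-(-(k : ℤ))) * x * Γ.Δ ^ (-(k : ℤ))) * Γ.Δ⁻¹ := by group
      rw [h]; exact h1

lemma zpow_delta_mem {k : ℤ} (hk : 0 ≤ k) : Γ.Δ ^ k ∈ Γ.pos := by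
  obtain ⟨n, rfl⟩ := Int.eq_ofNat_of_zero_le hk
  rw [zpow_natCast]; exact pow_mem Γ.delta_mem n

lemma key {x y d : G} (hx : x ∈ Γ.pos) (hy : y ∈ Γ.pos) (hd : Γ.IsLeftGcd d Γ.Δ y)
    (h : Γ.Δ⁻¹ * (x * y) ∈ Γ.pos) : Γ.Δ⁻¹ * (x * d) ∈ Γ.pos := by
  obtain ⟨e, he, hxe, hDe, hmin⟩ := Γ.lcm_right x hx Γ.Δ Γ.delta_mem
  have h1 : e⁻¹ * (x * y) ∈ Γ.pos := by
    refine hmin _ (Γ.pos.mul_mem hx hy) ?_ h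
    rw [show x⁻¹ * (x * y) = y by group]; exact hy
  have h2 : e⁻¹ * (x * Γ.Δ) ∈ Γ.pos := by
    refine hmin _ (Γ.pos.mul_mem hx Γ.delta_mem) ?_ ?_
    · rw [show x⁻¹ * (x * Γ.Δ) = Γ.Δ by group]; exact Γ.delta_mem
    · rw [show Γ.Δ⁻¹ * (x * Γ.Δ) = Γ.Δ⁻¹ * x * Γ.Δ by group]; exact Γ.tau_one_mem hx
  have hxd : (x⁻¹ * e)⁻¹ * d ∈ Γ.pos := by
    refine hd.2.2.2 (x⁻¹ * e) hxe ?_ ?_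
    · show (x⁻¹ * e)⁻¹ * Γ.Δ ∈ Γ.pos
      rw [show (x⁻¹ * e)⁻¹ * Γ.Δ = e⁻¹ * (x * Γ.Δ) by group]; exact h2
    · show (x⁻¹ * e)⁻¹ * y ∈ Γ.pos
      rw [show (x⁻¹ * e)⁻¹ * y = e⁻¹ * (x * y) by group]; exact h1
  have h3 : Γ.Δ⁻¹ * (x * d) = (Γ.Δ⁻¹ * e) * ((x⁻¹ * e)⁻¹ * d) := by group
  rw [h3]; exact Γ.pos.mul_mem hDe hxd

lemma main : ∀ (L : List G) (P : G), P ∈ Γ.pos →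
    (∀ x ∈ L, x ∈ Γ.pos) →
    (∀ (i : ℕ) (hi : i < L.length), Γ.IsLeftGcd L[i] Γ.Δ ((L.drop i).prod)) →
    Γ.Δ ^ (-((L.length : ℤ) - 1)) * (P * L.prod) ∈ Γ.pos →
    Γ.Δ ^ (-((L.length : ℤ) - 1)) * (P * L.dropLast.prod) ∈ Γ.pos := by
  intro L
  induction L with
  | nil => intro P hP _ _ h; simpa using h
  | cons t rest ih =>
    intro P hP hmem hnorm h
    rcases rest with _ | ⟨r, rest'⟩
    · simpa using hP
    · set R : List G := r :: rest' with hR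
      have hRlen : (1 : ℤ) ≤ (R.length : ℤ) := by simp [hR]
      have hLmem : (t :: R).prod ∈ Γ.pos := by
        refine Submonoid.list_prod_mem _ ?_
        intro x hx; exact hmem x hx
      have hD1 : Γ.Δ⁻¹ * (P * (t :: R).prod) ∈ Γ.pos := by
        have heq : Γ.Δ⁻¹ * (P * (t :: R).prod)
            = Γ.Δ ^ ((R.length : ℤ) - 1) *
              (Γ.Δ ^ (-(((t :: R).length : ℤ) - 1)) * (P * (t :: R).prod)) := by
          simp only [hR, List.length_cons, List.prod_cons]
          push_cast
          group
        rw [heq]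
        exact Γ.pos.mul_mem (Γ.zpow_delta_mem (by omega)) h
      have hg0 : Γ.IsLeftGcd t Γ.Δ ((t :: R).prod) := by
        have := hnorm 0 (by simp)
        simpa using this
      have hPt : Γ.Δ⁻¹ * (P * t) ∈ Γ.pos := Γ.key hP hLmem hg0 hD1
      have hmem' : ∀ x ∈ R, x ∈ Γ.pos := fun x hx => hmem x (List.mem_cons_of_mem _ hx)
      have hnorm' : ∀ (i : ℕ) (hi : i < R.length), Γ.IsLeftGcd R[i] Γ.Δ ((R.drop i).prod) := by
        intro i hi
        have := hnorm (i + 1) (by simpa using Nat.succ_lt_succ hi)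
        simpa using this
      have h' : Γ.Δ ^ (-((R.length : ℤ) - 1)) * ((Γ.Δ⁻¹ * (P * t)) * R.prod) ∈ Γ.pos := by
        have heq : Γ.Δ ^ (-((R.length : ℤ) - 1)) * ((Γ.Δ⁻¹ * (P * t)) * R.prod)
            = Γ.Δ ^ (-(((t :: R).length : ℤ) - 1)) * (P * (t :: R).prod) := by
          simp only [hR, List.length_cons, List.prod_cons]
          push_cast
          group
        rw [heq]; exact h
      have hc := ih (Γ.Δ⁻¹ * (P * t)) hPt hmem' hnorm' h'
      have heq2 : Γ.Δ ^ (-(((t :: R).length : ℤ) - 1)) * (P * (t :: R).dropLast.prod)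
          = Γ.Δ ^ (-((R.length : ℤ) - 1)) * ((Γ.Δ⁻¹ * (P * t)) * R.dropLast.prod) := by
        rw [show (t :: R).dropLast = t :: R.dropLast by simp [hR]]
        simp only [hR, List.length_cons, List.prod_cons]
        push_cast
        group
      rw [heq2]; exact hc


end GarsideStructure

/-- Simultaneous decycling bound: if `a` has left normal form `a = Δᵖ s₁ ⋯ s_l`
with `l ≥ 1` and `q := p + l = sup a`, and `X ∈ G⁺` satisfies `sup(X a X⁻¹) ≤ q − 1`
(i.e. `X a X⁻¹ ≼ Δ^(q−1)`), then `X ≽ s_l`. -/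
theorem simultaneous_decycling_bound {G : Type*} [Group G] (Γ : GarsideStructure G)
    (a : G) (l : ℕ) (hl : 1 ≤ l) (p : ℤ) (s : Fin l → G)
    (hnf : a = Γ.Δ ^ p * (List.ofFn s).prod)
    (hsimple : ∀ i : Fin l, Γ.Simple (s i) ∧ s i ≠ 1 ∧ s i ≠ Γ.Δ)
    (hgcd : ∀ i : Fin l, Γ.IsLeftGcd (s i) Γ.Δ (((List.ofFn s).drop i.val).prod)
    )
    (X : G) (hX : X ∈ Γ.pos)
    (hsup : Γ.LeftDvd (X * a * X⁻¹) (Γ.Δ ^ (p + (l : ℤ) - 1))) :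
    Γ.RightDvd X (s ⟨l - 1, by omega⟩) := by
  have hu : (X * a * X⁻¹)⁻¹ * Γ.Δ ^ (p + (l : ℤ) - 1) ∈ Γ.pos := hsup
  have htX : Γ.Δ ^ (-(p + (l : ℤ) - 1)) * X * Γ.Δ ^ (p + (l : ℤ) - 1) ∈ Γ.pos :=
    Γ.tau_zpow_mem (p + (l : ℤ) - 1) X hX
  have hP0 : X * a⁻¹ * Γ.Δ ^ (p + (l : ℤ) - 1) ∈ Γ.pos := by
    have h : X * a⁻¹ * Γ.Δ ^ (p + (l : ℤ) - 1)
        = ((X * a * X⁻¹)⁻¹ * Γ.Δ ^ (p + (l : ℤ) - 1)) *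
          (Γ.Δ ^ (-(p + (l : ℤ) - 1)) * X * Γ.Δ ^ (p + (l : ℤ) - 1)) := by group
    rw [h]; exact Γ.pos.mul_mem hu htX
  have hP : Γ.Δ ^ ((l : ℤ) - 1) * (X * a⁻¹ * Γ.Δ ^ (p + (l : ℤ) - 1)) *
      Γ.Δ ^ (-((l : ℤ) - 1)) ∈ Γ.pos := by
    have := Γ.tau_zpow_mem (-((l : ℤ) - 1)) _ hP0
    simpa using this
  have hmem : ∀ x ∈ List.ofFn s, x ∈ Γ.pos := by
    intro x hx
    rw [List.mem_ofFn] at hx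
    obtain ⟨i, rfl⟩ := hx
    exact (hsimple i).1.1
  have hnorm : ∀ (i : ℕ) (hi : i < (List.ofFn s).length),
      Γ.IsLeftGcd (List.ofFn s)[i] Γ.Δ (((List.ofFn s).drop i).prod) := by
    intro i hi
    have hi' : i < l := by simpa using hi
    have := hgcd ⟨i, hi'⟩
    simpa [List.getElem_ofFn] using this
  have hmain_hyp : Γ.Δ ^ (-(((List.ofFn s).length : ℤ) - 1)) *
      ((Γ.Δ ^ ((l : ℤ) - 1) * (X * a⁻¹ * Γ.Δ ^ (p + (l : ℤ) - 1)) * Γ.Δ ^ (-((l : ℤ) - 1))) *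
        (List.ofFn s).prod) ∈ Γ.pos := by
    have heq : Γ.Δ ^ (-(((List.ofFn s).length : ℤ) - 1)) *
        ((Γ.Δ ^ ((l : ℤ) - 1) * (X * a⁻¹ * Γ.Δ ^ (p + (l : ℤ) - 1)) * Γ.Δ ^ (-((l : ℤ) - 1))) *
          (List.ofFn s).prod) = X := by
      rw [List.length_ofFn, hnf]
      group
    rw [heq]; exact hX
  have hconc := Γ.main (List.ofFn s) _ hP hmem hnorm hmain_hyp
  have hne : List.ofFn s ≠ [] := by
    have h1 : (List.ofFn s).length = l := by simp
    intro hcon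
    rw [hcon] at h1
    simp at h1
    omega
  have hbc : (List.ofFn s).prod = (List.ofFn s).dropLast.prod * s ⟨l - 1, by omega⟩ := by
    conv_lhs => rw [← List.dropLast_append_getLast hne]
    rw [List.prod_append, List.prod_singleton]
    congr 1
    rw [List.getLast_eq_getElem]
    simp [List.getElem_ofFn]
  show X * (s ⟨l - 1, by omega⟩)⁻¹ ∈ Γ.pos
  have heq2 : X * (s ⟨l - 1, by omega⟩)⁻¹ = Γ.Δ ^ (-(((List.ofFn s).length : ℤ) - 1)) *
      ((Γ.Δ ^ ((l : ℤ) - 1) * (X * a⁻¹ * Γ.Δ ^ (p + (l : ℤ) - 1)) * Γ.Δ ^ (-((l : ℤ) - 1))) *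
        (List.ofFn s).dropLast.prod) := by
    rw [List.length_ofFn, hnf, hbc]
    group
  rw [heq2]; exact hconc
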